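/- Lemma (vertex-transitivity and vertex stabilizers of the wreath product). The group {θ_{σ,φ} : σ ∈ ∏_{i∈V} Equiv.Perm N, φ ∈ Aut(𝒦)} acts transitively on the vertex set V → N of the power complex n^𝒦. Moreover, for a fixed a ∈ N, the stabilizer of the constant function ā (with value a) in the wreath product (∏_{i∈V} Equiv.Perm N) ⋊ Aut(𝒦), acting via (σ,φ) ↦ θ_{σ,φ}, equals the subgroup {(σ, φ) : σ_i(a) = a for all i ∈ V}, and this subgroup is isomorphic to the wreath product S_{n−1} ≀ Aut(𝒦) := (∏_{i∈V} Equiv.Perm {x : N // x ≠ a}) ⋊ Aut(𝒦). -/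

import Mathlib

/-- The face `F(ε)` of the power complex. -/
def face (n v : ℕ) (F : Set (Fin v)) (ε : Fin v → Fin n) : Set (Fin v → Fin n) :=
  {η | ∀ i ∉ F, η i = ε i}

/-- The power complex `n^𝒦`, as a family of subsets of `V → N`. -/
def powerComplex (n v : ℕ) (𝒦 : Set (Set (Fin v))) : Set (Set (Fin v → Fin n)) :=
  {A | ∃ F ∈ 𝒦, ∃ ε : Fin v → Fin n, A = face n v F ε}

/-- The automorphism group `Aut(𝒦)` of the complex `𝒦`: all permutations `φ` of the vertex
set such that `F ∈ 𝒦 ↔ φ(F) ∈ 𝒦` for every subset `F`. -/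
def AutK (v : ℕ) (𝒦 : Set (Set (Fin v))) : Subgroup (Equiv.Perm (Fin v)) where
  carrier := {φ | ∀ F : Set (Fin v), F ∈ 𝒦 ↔ φ '' F ∈ 𝒦}
  one_mem' := by intro F; simp
  mul_mem' := by
    intro φ ψ hφ hψ F
    have h : ⇑(φ * ψ) '' F = φ '' (ψ '' F) := by
      rw [← Set.image_comp]; rfl
    rw [h]
    exact (hψ F).trans (hφ (ψ '' F))
  inv_mem' := by
    intro φ hφ F
    have h := hφ (⇑(φ⁻¹) '' F)
    have h2 : ⇑φ '' (⇑(φ⁻¹) '' F) = F := by ext x; simp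
    rw [h2] at h
    exact h.symm

/-- The permutation `θ_{σ,φ}` of `V → N`, `θ_{σ,φ}(η) i = σ_{φ⁻¹ i}(η (φ⁻¹ i))`. -/
def theta {n v : ℕ} (σ : Fin v → Equiv.Perm (Fin n)) (φ : Equiv.Perm (Fin v)) :
    Equiv.Perm (Fin v → Fin n) where
  toFun η i := σ (φ⁻¹ i) (η (φ⁻¹ i))
  invFun η i := (σ i)⁻¹ (η (φ i))
  left_inv η := by funext i; simp
  right_inv η := by funext i; simp

/-- The coordinate-permuting action on a direct power of a group: `(φ·σ)_i = σ_{φ⁻¹ i}`. -/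
def permPi (v : ℕ) (G : Type*) [Group G] : Equiv.Perm (Fin v) →* MulAut (Fin v → G) where
  toFun φ :=
    { toFun := fun σ i => σ (φ⁻¹ i)
      invFun := fun σ i => σ (φ i)
      left_inv := fun σ => by funext i; simp
      right_inv := fun σ => by funext i; simp
      map_mul' := fun σ τ => rfl }
  map_one' := by ext σ i; simp
  map_mul' := fun φ ψ => by ext σ i; simp [mul_inv_rev]

/-- The wreath product `S_n ≀ Aut(𝒦) = (∏_{i ∈ V} S_n) ⋊ Aut(𝒦)`. -/
abbrev Wreath (n v : ℕ) (𝒦 : Set (Set (Fin v))) :=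
  (Fin v → Equiv.Perm (Fin n)) ⋊[(permPi v (Equiv.Perm (Fin n))).comp (AutK v 𝒦).subtype]
    (AutK v 𝒦)

/-- The subgroup of the wreath product consisting of the pairs `(σ, φ)` with `σ_i(a) = a`
for all `i` (the stabilizer of the base vertex, the constant function with value `a`). -/
def vertexStab (n v : ℕ) (𝒦 : Set (Set (Fin v))) (a : Fin n) : Subgroup (Wreath n v 𝒦) where
  carrier := {p | ∀ i, p.left i a = a}
  one_mem' := by intro i; simp [SemidirectProduct.one_left]
  mul_mem' := by
    intro p q hp hq i
    have h : (p * q).left i = p.left i * q.left ((p.right : Equiv.Perm (Fin v))⁻¹ i) := rfl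
    rw [h, Equiv.Perm.mul_apply, hq _, hp i]
  inv_mem' := by
    intro p hp i
    have h : (p⁻¹).left i = (p.left ((p.right : Equiv.Perm (Fin v)) i))⁻¹ := rfl
    rw [h]
    have := hp ((p.right : Equiv.Perm (Fin v)) i)
    exact (Equiv.Perm.inv_eq_iff_eq).mpr this.symm

/-- Lemma: vertex-transitivity and vertex stabilizers of the wreath product.  The group
`{θ_{σ,φ} : φ ∈ Aut(𝒦)}` is transitive on the vertex set `V → N` of `n^𝒦`; the stabilizer in
`S_n ≀ Aut(𝒦)` of the constant function `ā` is `{(σ,φ) : σ_i(a) = a for all i}`, and this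
subgroup is isomorphic to the wreath product `S_{n−1} ≀ Aut(𝒦)`. -/
theorem wreath_vertex_transitive_and_stabilizer (n v : ℕ) (hn : 2 ≤ n) (hv : 1 ≤ v)
    (𝒦 : Set (Set (Fin v))) (a : Fin n) :
    (∀ ε η : Fin v → Fin n, ∃ (σ : Fin v → Equiv.Perm (Fin n)) (φ : Equiv.Perm (Fin v)),
      φ ∈ AutK v 𝒦 ∧ theta σ φ ε = η) ∧
    (∀ p : Wreath n v 𝒦,
      theta p.left (p.right : Equiv.Perm (Fin v)) (fun _ => a) = (fun _ => a) ↔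
        p ∈ vertexStab n v 𝒦 a) ∧
    Nonempty ((vertexStab n v 𝒦 a) ≃*
      ((Fin v → Equiv.Perm {x : Fin n // x ≠ a})
        ⋊[(permPi v (Equiv.Perm {x : Fin n // x ≠ a})).comp (AutK v 𝒦).subtype]
        (AutK v 𝒦))) := by
  classical
  refine ⟨?_, ?_, ?_⟩
  · intro ε η
    refine ⟨fun i => Equiv.swap (ε i) (η i), 1, (AutK v 𝒦).one_mem, ?_⟩
    funext i
    simp [theta]
  · intro p
    constructor
    · intro h i
      have := congrFun h ((p.right : Equiv.Perm (Fin v)) i)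
      simpa [theta] using this
    · intro h
      funext i
      have := h ((p.right : Equiv.Perm (Fin v))⁻¹ i)
      simpa [theta] using this
  · -- the isomorphism
    have hiff : ∀ (q : vertexStab n v 𝒦 a) (i : Fin v) (x : Fin n),
        x ≠ a ↔ (q : Wreath n v 𝒦).left i x ≠ a := by
      intro q i x
      have ha : (q : Wreath n v 𝒦).left i a = a := q.2 i
      constructor
      · intro hx h
        exact hx (((q : Wreath n v 𝒦).left i).injective (h.trans ha.symm))
      · intro h hx
        subst hx; exact h ha
    refine ⟨MulEquiv.symm ?_⟩
    refine
      { toFun := fun p => ⟨⟨fun i => Equiv.Perm.ofSubtype (p.left i), p.right⟩,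
          fun i => Equiv.Perm.ofSubtype_apply_of_not_mem _ (by simp)⟩
        invFun := fun q => ⟨fun i => Equiv.Perm.subtypePerm ((q : Wreath n v 𝒦).left i)
          (fun x => (hiff q i x).symm), (q : Wreath n v 𝒦).right⟩
        left_inv := ?_
        right_inv := ?_
        map_mul' := ?_ }
    · intro p
      ext i x
      · simp [Equiv.Perm.subtypePerm_apply, Equiv.Perm.ofSubtype_apply_coe]
      · rfl
    · intro q
      refine Subtype.ext (SemidirectProduct.ext ?_ rfl)
      funext i
      exact Equiv.Perm.ofSubtype_subtypePerm (fun x => (hiff q i x).symm) (fun x hx => by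
        intro hxa; subst hxa; exact hx (q.2 i))
    · intro p q
      refine Subtype.ext (SemidirectProduct.ext ?_ rfl)
      funext i
      simp [SemidirectProduct.mul_left, map_mul]
      rfl
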